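/- Let A be an N×N Hermitian matrix with zeros on the diagonal and all off-diagonal entries of modulus 1 (i.e., |A_{uv}| = 1 for u ≠ v and A_{uv} = conj(A_{vu})). Define P_n as by P_0=1, P_1(x)=x, P_2(x)=x²−(N−1), P_n(x)=x P_{n−1}(x)−(N−2)P_{n−2}(x). Then for all n and all indices u_0, u_n, the matrix entry P_n(A)_{u_0 u_n} equals the sum over all non-backtracking paths u_0 u_1 ⋯ u_n (paths with u_j ≠ u_{j−1} for all j and u_j ≠ u_{j−2} for all j ≥ 2) of the products A_{u_0 u_1}·A_{u_1 u_2}·⋯·A_{u_{n−1} u_n}. -/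

import Mathlib

open Polynomial Finset

open scoped Classical

def NBx {N m : ℕ} (p : Fin (m + 1) → Fin N) : Prop :=
  (∀ j : ℕ, ∀ hj : j < m, p ⟨j + 1, Nat.succ_lt_succ hj⟩ ≠ p ⟨j, Nat.lt_succ_of_lt hj⟩) ∧
  (∀ j : ℕ, ∀ hj : j + 2 ≤ m, p ⟨j + 2, Nat.lt_succ_of_le hj⟩ ≠
    p ⟨j, Nat.lt_succ_of_le (Nat.le_trans (Nat.le_add_right j 2) hj)⟩)

noncomputable def pset (N m : ℕ) (u w : Fin N) : Finset (Fin (m + 1) → Fin N) :=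
  univ.filter (fun p => p 0 = u ∧ p (Fin.last m) = w ∧ NBx p)

noncomputable def fp {N : ℕ} (A : Matrix (Fin N) (Fin N) ℂ) (m : ℕ) (u w : Fin N) : ℂ :=
  ∑ p ∈ pset N m u w, ∏ j : Fin m, A (p j.castSucc) (p j.succ)

lemma NBx_succ_iff {N m : ℕ} (p : Fin (m + 2) → Fin N) :
    NBx p ↔ NBx (Fin.tail p) ∧ p 1 ≠ p 0 ∧ (∀ _ : 1 ≤ m, p ⟨2, by omega⟩ ≠ p 0) := by
  constructor
  · rintro ⟨h1', h2'⟩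
    refine ⟨⟨?_, ?_⟩, ?_, ?_⟩
    · intro j hj
      have := h1' (j + 1) (by omega)
      simp only [Fin.tail, Fin.succ_mk]
      exact this
    · intro j hj
      have := h2' (j + 1) (by omega)
      simp only [Fin.tail, Fin.succ_mk]
      exact this
    · simpa only [zero_add, Fin.mk_zero, Fin.mk_one] using h1' 0 (by omega)
    · intro _
      simpa only [Fin.mk_zero] using h2' 0 (by omega)
  · rintro ⟨⟨h1', h2'⟩, h3, h4⟩
    constructor
    · intro j hj
      match j with
      | 0 => simpa only [zero_add, Fin.mk_zero, Fin.mk_one] using h3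
      | j + 1 =>
        have := h1' j (by omega)
        simp only [Fin.tail, Fin.succ_mk] at this
        exact this
    · intro j hj
      match j with
      | 0 => simpa only [Fin.mk_zero] using h4 (by omega)
      | j + 1 =>
        have := h2' j (by omega)
        simp only [Fin.tail, Fin.succ_mk] at this
        exact this

lemma prod_head_tail {N m : ℕ} (A : Matrix (Fin N) (Fin N) ℂ) (q : Fin (m + 2) → Fin N) :
    ∏ j : Fin (m + 1), A (q j.castSucc) (q j.succ)
      = A (q 0) (q 1) * ∏ j : Fin m, A (Fin.tail q j.castSucc) (Fin.tail q j.succ) := by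
  rw [Fin.prod_univ_succ]
  simp only [Fin.castSucc_zero, Fin.succ_zero_eq_one, Fin.tail, Fin.succ_castSucc]

lemma fp_zero {N : ℕ} (A : Matrix (Fin N) (Fin N) ℂ) (u w : Fin N) :
    fp A 0 u w = if u = w then 1 else 0 := by
  unfold fp pset
  have hNB : ∀ p : Fin 1 → Fin N, NBx p := by
    intro p; exact ⟨fun j hj => by omega, fun j hj => by omega⟩
  by_cases h : u = w
  · subst h
    rw [if_pos rfl]
    have : (univ.filter (fun p : Fin 1 → Fin N => p 0 = u ∧ p (Fin.last 0) = u ∧ NBx p))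
        = {fun _ => u} := by
      ext p
      simp only [mem_filter, mem_univ, true_and, mem_singleton]
      constructor
      · rintro ⟨h1, -, -⟩
        funext i
        have : i = 0 := Subsingleton.elim _ _
        rw [this, h1]
      · rintro rfl
        exact ⟨rfl, rfl, hNB _⟩
    rw [this]
    simp
  · rw [if_neg h]
    apply Finset.sum_eq_zero
    intro p hp
    simp only [mem_filter, mem_univ, true_and] at hp
    exact absurd (hp.1.symm.trans hp.2.1) h

lemma fp_one {N : ℕ} (A : Matrix (Fin N) (Fin N) ℂ) (hdiag : ∀ u, A u u = 0) (u w : Fin N) :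
    fp A 1 u w = A u w := by
  unfold fp pset
  by_cases h : u = w
  · subst h
    rw [hdiag u]
    apply Finset.sum_eq_zero
    intro p hp
    simp only [mem_filter, mem_univ, true_and] at hp
    obtain ⟨h0, hl, hNB, -⟩ := hp
    have h10 := hNB 0 (by omega)
    rw [show (⟨0 + 1, by omega⟩ : Fin 2) = 1 from rfl,
      show (⟨0, by omega⟩ : Fin 2) = 0 from rfl] at h10
    exact absurd (by rw [h0, show (Fin.last 1) = 1 from rfl] at *; rw [hl]) h10
  · have : (univ.filter (fun p : Fin 2 → Fin N => p 0 = u ∧ p (Fin.last 1) = w ∧ NBx p))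
        = {![u, w]} := by
      ext p
      simp only [mem_filter, mem_univ, true_and, mem_singleton]
      constructor
      · rintro ⟨h1, h2, -⟩
        funext i
        match i with
        | 0 => simpa using h1
        | 1 => simpa using h2
      · rintro rfl
        refine ⟨rfl, rfl, ⟨?_, fun j hj => by omega⟩⟩
        intro j hj
        match j with
        | 0 => simpa only [zero_add, Fin.mk_zero, Fin.mk_one, Matrix.cons_val_one, Matrix.cons_val_zero] using (Ne.symm h)
    rw [this]
    simp

lemma step {N : ℕ} (A : Matrix (Fin N) (Fin N) ℂ) (hherm : A.IsHermitian)
    (hdiag : ∀ u, A u u = 0) (hmod : ∀ u v, u ≠ v → ‖A u v‖ = 1)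
    (k : ℕ) (u w : Fin N) :
    ∑ v, A u v * fp A (k + 1) v w
      = fp A (k + 2) u w + (if k = 0 then (N : ℂ) - 1 else (N : ℂ) - 2) * fp A k u w := by
  set T : Finset (Fin (k + 2) → Fin N) :=
    univ.filter (fun p => p (Fin.last (k + 1)) = w ∧ NBx p) with hT
  set E₀ : Finset (Fin (k + 3) → Fin N) :=
    univ.filter (fun q => q 0 = u ∧ q (Fin.last (k + 2)) = w ∧ NBx (Fin.tail q)) with hE₀
  -- Step A: collapse the sum over v
  have stepA : ∑ v, A u v * fp A (k + 1) v w
      = ∑ p ∈ T, A u (p 0) * ∏ j : Fin (k + 1), A (p j.castSucc) (p j.succ) := by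
    rw [← Finset.sum_fiberwise T (fun p => p 0)
      (fun p => A u (p 0) * ∏ j : Fin (k + 1), A (p j.castSucc) (p j.succ))]
    refine Finset.sum_congr rfl fun v _ => ?_
    unfold fp
    have hset : pset N (k + 1) v w = T.filter (fun p => p 0 = v) := by
      ext p
      simp only [pset, hT, mem_filter, mem_univ, true_and, filter_filter]
      tauto
    rw [hset, Finset.mul_sum]
    refine Finset.sum_congr rfl fun p hp => ?_
    rw [(Finset.mem_filter.mp hp).2]
  -- Step B: prepend u
  have stepB : ∑ p ∈ T, A u (p 0) * ∏ j : Fin (k + 1), A (p j.castSucc) (p j.succ)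
      = ∑ q ∈ E₀, ∏ j : Fin (k + 2), A (q j.castSucc) (q j.succ) := by
    refine Finset.sum_bij' (fun p _ => Fin.cons u p) (fun q _ => Fin.tail q) ?_ ?_ ?_ ?_ ?_
    · intro p hp
      simp only [hT, mem_filter, mem_univ, true_and] at hp
      simp only [hE₀, mem_filter, mem_univ, true_and]
      refine ⟨Fin.cons_zero _ _, ?_, by rw [Fin.tail_cons]; exact hp.2⟩
      rw [← Fin.succ_last, Fin.cons_succ]
      exact hp.1
    · intro q hq
      simp only [hE₀, mem_filter, mem_univ, true_and] at hq
      simp only [hT, mem_filter, mem_univ, true_and]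
      refine ⟨?_, hq.2.2⟩
      show q (Fin.last (k + 1)).succ = w
      rw [Fin.succ_last]
      exact hq.2.1
    · intro p _; exact Fin.tail_cons _ _
    · intro q hq
      simp only [hE₀, mem_filter, mem_univ, true_and] at hq
      show Fin.cons u (Fin.tail q) = q
      rw [← hq.1]
      exact Fin.cons_self_tail q
    · intro p _
      have e1 : (1 : Fin (k + 3)) = (0 : Fin (k + 2)).succ := by ext; simp
      beta_reduce
      rw [prod_head_tail A (Fin.cons u p), Fin.tail_cons, Fin.cons_zero, e1, Fin.cons_succ]
  -- Step C: terms with q 1 = q 0 vanish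
  set E : Finset (Fin (k + 3) → Fin N) := E₀.filter (fun q => q 1 ≠ q 0) with hE
  have stepC : ∑ q ∈ E, ∏ j : Fin (k + 2), A (q j.castSucc) (q j.succ)
      = ∑ q ∈ E₀, ∏ j : Fin (k + 2), A (q j.castSucc) (q j.succ) := by
    refine Finset.sum_filter_of_ne fun q hq hne => ?_
    simp only [hE₀, mem_filter, mem_univ, true_and] at hq
    intro h10
    apply hne
    rw [prod_head_tail, h10, hq.1, hdiag, zero_mul]
  -- Step D: split by q 2 ≠ q 0
  have stepD := Finset.sum_filter_add_sum_filter_not E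
    (fun q => q ⟨2, by omega⟩ ≠ q 0)
    (fun q => ∏ j : Fin (k + 2), A (q j.castSucc) (q j.succ))
  have good : E.filter (fun q => q ⟨2, by omega⟩ ≠ q 0) = pset N (k + 2) u w := by
    ext q
    simp only [hE, hE₀, pset, mem_filter, mem_univ, true_and, filter_filter]
    rw [NBx_succ_iff q]
    have hg : 1 ≤ k + 1 := by omega
    constructor
    · rintro ⟨⟨⟨h1, h2, h3⟩, h4⟩, h5⟩
      exact ⟨h1, h2, h3, h4, fun _ => h5⟩
    · rintro ⟨h1, h2, h3, h4, h5⟩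
      exact ⟨⟨⟨h1, h2, h3⟩, h4⟩, h5 hg⟩
  set B : Finset (Fin (k + 3) → Fin N) := E.filter (fun q => ¬q ⟨2, by omega⟩ ≠ q 0) with hB
  have hBmem : ∀ q : Fin (k + 3) → Fin N, q ∈ B ↔
      q 0 = u ∧ q (Fin.last (k + 2)) = w ∧ NBx (Fin.tail q) ∧ q 1 ≠ q 0 ∧
        q ⟨2, by omega⟩ = q 0 := by
    intro q
    simp only [hB, hE, hE₀, mem_filter, mem_univ, true_and, not_not]
    tauto
  set S : Finset ((Fin (k + 1) → Fin N) × Fin N) :=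
    ((pset N k u w) ×ˢ univ).filter
      (fun x => x.2 ≠ u ∧ ∀ _ : 1 ≤ k, x.2 ≠ x.1 ⟨1, by omega⟩) with hS
  have e1 : (1 : Fin (k + 3)) = (0 : Fin (k + 2)).succ := by ext; simp
  have e1' : (1 : Fin (k + 2)) = (0 : Fin (k + 1)).succ := by ext; simp
  have e2 : (⟨2, by omega⟩ : Fin (k + 3)) = ((⟨1, by omega⟩ : Fin (k + 2))).succ := by
    ext; simp; exact (Nat.mod_eq_of_lt (by omega)).symm
  have e2' : ∀ _ : 1 ≤ k,
      (⟨2, by omega⟩ : Fin (k + 2)) = ((⟨1, by omega⟩ : Fin (k + 1))).succ := by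
    intro hk; ext; simp
  have badsum : ∑ q ∈ B, ∏ j : Fin (k + 2), A (q j.castSucc) (q j.succ)
      = ∑ x ∈ S, ∏ j : Fin k, A (x.1 j.castSucc) (x.1 j.succ) := by
    refine Finset.sum_bij' (fun q _ => (Fin.tail (Fin.tail q), q 1))
      (fun x _ => Fin.cons u (Fin.cons x.2 x.1)) ?_ ?_ ?_ ?_ ?_
    · intro q hq
      rw [hBmem] at hq
      obtain ⟨hq0, hqlast, hqtail, hq10, hq20⟩ := hq
      simp only [hS, mem_filter, mem_product, mem_univ, and_true, true_and]
      refine ⟨?_, ?_, ?_⟩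
      · simp only [pset, mem_filter, mem_univ, true_and]
        refine ⟨?_, ?_, ((NBx_succ_iff (Fin.tail q)).mp hqtail).1⟩
        · show q (0 : Fin (k + 1)).succ.succ = u
          have : (0 : Fin (k + 1)).succ.succ = (⟨2, by omega⟩ : Fin (k + 3)) := by ext; simp
          rw [this, hq20, hq0]
        · show q (Fin.last k).succ.succ = w
          rw [Fin.succ_last, Fin.succ_last]
          exact hqlast
      · rw [hq0] at hq10; exact hq10
      · intro hk
        have h31 := hqtail.2 0 (by omega : 0 + 2 ≤ k + 1)
        show q 1 ≠ q ((⟨1, by omega⟩ : Fin (k + 1))).succ.succ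
        simp only [Fin.tail, Fin.succ_mk, Fin.mk_one] at h31 ⊢
        exact fun h => h31 h.symm
    · intro x hx
      simp only [hS, mem_filter, mem_product, mem_univ, and_true, true_and] at hx
      obtain ⟨hr, hv, hguard⟩ := hx
      simp only [pset, mem_filter, mem_univ, true_and] at hr
      obtain ⟨hr0, hrlast, hrNB⟩ := hr
      rw [hBmem]
      beta_reduce
      refine ⟨Fin.cons_zero _ _, ?_, ?_, ?_, ?_⟩
      · rw [← Fin.succ_last, Fin.cons_succ, ← Fin.succ_last, Fin.cons_succ]
        exact hrlast
      · rw [Fin.tail_cons, NBx_succ_iff]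
        refine ⟨by rw [Fin.tail_cons]; exact hrNB, ?_, ?_⟩
        · rw [e1', Fin.cons_succ, Fin.cons_zero]
          rw [show x.1 (0 : Fin (k + 1)) = u from hr0]
          exact fun h => hv h.symm
        · intro hk
          rw [e2' hk, Fin.cons_succ, Fin.cons_zero]
          exact fun h => (hguard hk) h.symm
      · rw [e1, Fin.cons_succ, Fin.cons_zero, Fin.cons_zero]
        exact hv
      · have e3 : (⟨1, by omega⟩ : Fin (k + 2)) = (0 : Fin (k + 1)).succ := by ext; simp
        rw [e2, Fin.cons_succ, e3, Fin.cons_succ, Fin.cons_zero]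
        exact hr0
    · intro q hq
      rw [hBmem] at hq
      beta_reduce
      have h1 : q 1 = Fin.tail q 0 := by
        show q 1 = q (0 : Fin (k + 2)).succ
        rw [← e1]
      have h2 : Fin.cons (q 1) (Fin.tail (Fin.tail q)) = Fin.tail q := by
        rw [h1]; exact Fin.cons_self_tail (Fin.tail q)
      rw [h2, ← hq.1]
      exact Fin.cons_self_tail q
    · intro x hx
      beta_reduce
      rw [Fin.tail_cons, Fin.tail_cons, e1, Fin.cons_succ, Fin.cons_zero]
    · intro q hq
      rw [hBmem] at hq
      obtain ⟨hq0, hqlast, hqtail, hq10, hq20⟩ := hq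
      beta_reduce
      rw [prod_head_tail, prod_head_tail]
      have ht0 : Fin.tail q 0 = q 1 := by
        show q (0 : Fin (k + 2)).succ = q 1; rw [← e1]
      have ht1 : Fin.tail q 1 = u := by
        show q (1 : Fin (k + 2)).succ = u
        rw [show (1 : Fin (k + 2)).succ = (⟨2, by omega⟩ : Fin (k + 3)) by ext; simp,
          hq20, hq0]
      rw [ht0, ht1, hq0]
      have hvu : q 1 ≠ u := by rw [hq0] at hq10; exact hq10
      have hone : A u (q 1) * A (q 1) u = 1 := by
        rw [(hherm.apply (q 1) u).symm, Complex.star_def, Complex.mul_conj,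
          Complex.normSq_eq_norm_sq, hmod u (q 1) (Ne.symm hvu)]
        norm_num
      rw [← mul_assoc, hone, one_mul]
  have stepE : ∑ x ∈ S, ∏ j : Fin k, A (x.1 j.castSucc) (x.1 j.succ)
      = (if k = 0 then (N : ℂ) - 1 else (N : ℂ) - 2) * fp A k u w := by
    rw [hS, Finset.sum_filter, Finset.sum_product]
    simp only []
    unfold fp
    rw [Finset.mul_sum]
    refine Finset.sum_congr rfl fun r hr => ?_
    simp only [pset, mem_filter, mem_univ, true_and] at hr
    rw [← Finset.sum_filter, Finset.sum_const, nsmul_eq_mul]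
    by_cases hk : k = 0
    · subst hk
      rw [if_pos rfl]
      congr 1
      have hset : (univ.filter (fun v : Fin N => v ≠ u ∧ ∀ _ : (1 : ℕ) ≤ 0,
          v ≠ r ⟨1, by omega⟩)) = univ.erase u := by
        ext v
        simp only [mem_filter, mem_univ, true_and, Finset.mem_erase, and_true]
        exact ⟨fun h => h.1, fun h => ⟨h, fun hc => absurd hc (by omega)⟩⟩
      have hN1 : 1 ≤ N := u.pos
      rw [hset, Finset.card_erase_of_mem (mem_univ u), Finset.card_univ, Fintype.card_fin,
        Nat.cast_sub hN1, Nat.cast_one]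
    · rw [if_neg hk]
      have hk1 : 1 ≤ k := by omega
      congr 1
      have hru : r ⟨1, by omega⟩ ≠ u := by
        have := hr.2.2.1 0 (by omega : 0 < k)
        simpa [hr.1, Fin.mk_zero] using this
      have hset : (univ.filter (fun v : Fin N => v ≠ u ∧ ∀ _ : 1 ≤ k,
          v ≠ r ⟨1, by omega⟩)) = univ \ {u, r ⟨1, by omega⟩} := by
        ext v
        simp [hk1, not_or]
      rw [hset]
      have hcard2 : ({u, r ⟨1, by omega⟩} : Finset (Fin N)).card = 2 := by
        rw [Finset.card_insert_of_notMem (by simpa using hru.symm), Finset.card_singleton]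
      have hN2 : 2 ≤ N := by
        have := Finset.card_le_univ ({u, r ⟨1, by omega⟩} : Finset (Fin N))
        rwa [hcard2, Fintype.card_fin] at this
      rw [Finset.card_sdiff_of_subset (Finset.subset_univ _), Finset.card_univ, Fintype.card_fin,
        hcard2, Nat.cast_sub hN2]
      simp
  rw [stepA, stepB, ← stepC, ← stepD, good, badsum, stepE]
  rfl

open scoped Classical in
/-- Claim 2.2: for a Hermitian matrix `A` with zero diagonal and unimodular off-diagonal
entries, the entry `P_n(A)_{u₀ uₙ}` is the sum over non-backtracking paths from `u₀` to `uₙ`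
of the products of the entries of `A` along the path. -/
theorem P_entry_eq_sum_nonbacktracking (N : ℕ) (A : Matrix (Fin N) (Fin N) ℂ)
    (hherm : A.IsHermitian)
    (hdiag : ∀ u, A u u = 0)
    (hmod : ∀ u v, u ≠ v → ‖A u v‖ = 1)
    (P : ℕ → Polynomial ℂ)
    (hP0 : P 0 = 1)
    (hP1 : P 1 = Polynomial.X)
    (hP2 : P 2 = Polynomial.X ^ 2 - Polynomial.C ((N : ℂ) - 1))
    (hPrec : ∀ n, 3 ≤ n →
      P n = Polynomial.X * P (n - 1) - Polynomial.C ((N : ℂ) - 2) * P (n - 2))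
    (n : ℕ) (u₀ uₙ : Fin N) :
    (Polynomial.aeval A (P n)) u₀ uₙ =
      ∑ u ∈ Finset.univ.filter (fun u : Fin (n + 1) → Fin N =>
          u 0 = u₀ ∧ u (Fin.last n) = uₙ ∧
          (∀ j : ℕ, ∀ hj : j < n, u ⟨j + 1, by omega⟩ ≠ u ⟨j, by omega⟩) ∧
          (∀ j : ℕ, ∀ hj : j + 2 ≤ n, u ⟨j + 2, by omega⟩ ≠ u ⟨j, by omega⟩)),
        ∏ j : Fin n, A (u j.castSucc) (u j.succ) := by
  have key : ∀ n : ℕ, ∀ u w : Fin N, (Polynomial.aeval A (P n)) u w = fp A n u w := by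
    intro n
    induction n using Nat.strong_induction_on with
    | _ n ih =>
    intro u w
    match n with
    | 0 =>
      rw [hP0, map_one, fp_zero, Matrix.one_apply]
    | 1 =>
      rw [hP1, aeval_X, fp_one A hdiag]
    | 2 =>
      rw [hP2, map_sub, map_pow, aeval_X, aeval_C, Matrix.sub_apply, pow_two,
        Matrix.mul_apply]
      have hstep := step A hherm hdiag hmod 0 u w
      norm_num at hstep
      have h2 : (∑ v, A u v * A v w) = fp A 2 u w + ((N : ℂ) - 1) * fp A 0 u w := by
        rw [← hstep]
        exact Finset.sum_congr rfl fun v _ => by rw [fp_one A hdiag]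
      rw [h2, fp_zero, Matrix.algebraMap_matrix_apply]
      by_cases huw : u = w <;> simp [huw]
    | (k + 3) =>
      rw [hPrec (k + 3) (by omega), show k + 3 - 1 = k + 2 from rfl,
        show k + 3 - 2 = k + 1 from rfl]
      set c : ℂ := (N : ℂ) - 2 with hc
      simp only [map_sub, map_mul, aeval_X, aeval_C]
      rw [Matrix.sub_apply, Matrix.mul_apply, ← Algebra.smul_def, Matrix.smul_apply,
        smul_eq_mul]
      have hstep := step A hherm hdiag hmod (k + 1) u w
      norm_num at hstep
      have h2 : (∑ v, A u v * (Polynomial.aeval A (P (k + 2))) v w)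
          = fp A (k + 3) u w + ((N : ℂ) - 2) * fp A (k + 1) u w := by
        rw [← hstep]
        exact Finset.sum_congr rfl fun v _ => by rw [ih (k + 2) (by omega)]
      rw [h2, ih (k + 1) (by omega)]
      ring
  refine (key n u₀ uₙ).trans ?_
  unfold fp pset
  refine Finset.sum_congr (Finset.filter_congr fun p _ => ?_) fun _ _ => rfl
  unfold NBx
  exact Iff.rfl
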